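/- Let $G = (V,E)$ be a directed graph with $n = |V|$ vertices, nonnegative node costs $c$ and node lengths $x$ with $x_u \leq \delta/(6\log_2 n)$ for all $u \in V$, for some $\delta > 0$. Define $\mathrm{vol}(S) = \sum_{v \in S} c(v) x_v$. Then for any $v \in V$ there exists a radius $r \in [\delta/(6\log_2 n), \delta)$ such that $c(\Gamma^+(B^+(v,r))) \leq (12 \log_2 n / \delta)\,[\mathrm{vol}(B^+(v,r)) + \mathrm{vol}(V)/n]$. -/

import Mathlib

/-- A directed path from `u` to `v` given as the list of its vertices. -/
def DPath {V : Type*} (E : V → V → Prop) (u v : V) (l : List V) : Prop :=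
  l.Chain' E ∧ l.head? = some u ∧ l.getLast? = some v

/-- The node-length of a path: sum of `x` over its vertices (both endpoints included). -/
def plen {V : Type*} (x : V → ℝ) (l : List V) : ℝ := (l.map x).sum

/-- Node-length shortest path distance. -/
noncomputable def dgr {V : Type*} (E : V → V → Prop) (x : V → ℝ) (u v : V) : ℝ :=
  sInf {L : ℝ | ∃ l, DPath E u v l ∧ plen x l = L}

/-- The out-ball of radius `r` around `v`: vertices reachable within node-length `r`. -/
def ballOut {V : Type*} (E : V → V → Prop) (x : V → ℝ) (v : V) (r : ℝ) : Set V :=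
  {u | ∃ l, DPath E v u l ∧ plen x l ≤ r}

/-- The out-boundary of a vertex set. -/
def outBd {V : Type*} (E : V → V → Prop) (S : Set V) : Set V :=
  {u | u ∉ S ∧ ∃ w ∈ S, E w u}

namespace Stmt4Aux

open MeasureTheory Set

variable {V : Type*} {E : V → V → Prop} {x : V → ℝ} {v : V}

/-- The set of path lengths from `v` to `u`. -/
def PS (E : V → V → Prop) (x : V → ℝ) (v u : V) : Set ℝ :=
  {L : ℝ | ∃ l, DPath E v u l ∧ plen x l = L}

lemma dgr_eq (u : V) : dgr E x v u = sInf (PS E x v u) := rfl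

lemma plen_nonneg (hx0 : ∀ u, 0 ≤ x u) (l : List V) : 0 ≤ plen x l := by
  apply List.sum_nonneg
  intro a ha
  simp only [List.mem_map] at ha
  obtain ⟨b, _, rfl⟩ := ha
  exact hx0 b

lemma ballOut_mono {r s : ℝ} (h : r ≤ s) : ballOut E x v r ⊆ ballOut E x v s := by
  rintro u ⟨l, hl, hp⟩
  exact ⟨l, hl, hp.trans h⟩

lemma bddBelow_PS (hx0 : ∀ u, 0 ≤ x u) (u : V) : BddBelow (PS E x v u) := by
  refine ⟨0, ?_⟩
  rintro L ⟨l, _, rfl⟩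
  exact plen_nonneg hx0 l

lemma dgr_le_of_mem (hx0 : ∀ u, 0 ≤ x u) {u : V} {r : ℝ} (h : u ∈ ballOut E x v r) :
    dgr E x v u ≤ r := by
  obtain ⟨l, hl, hp⟩ := h
  exact le_trans (csInf_le (bddBelow_PS hx0 u) ⟨l, hl, rfl⟩) hp

lemma le_dgr_of_not_mem {u : V} {r : ℝ} (hne : (PS E x v u).Nonempty)
    (h : u ∉ ballOut E x v r) : r ≤ dgr E x v u := by
  apply le_csInf hne
  rintro L ⟨l, hl, rfl⟩
  by_contra hlt
  push_neg at hlt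
  exact h ⟨l, hl, hlt.le⟩

lemma mem_ball_of_dgr_lt {u : V} {r : ℝ} (hne : (PS E x v u).Nonempty)
    (h : dgr E x v u < r) : u ∈ ballOut E x v r := by
  obtain ⟨L, hL, hLr⟩ := exists_lt_of_csInf_lt hne h
  obtain ⟨l, hl, rfl⟩ := hL
  exact ⟨l, hl, hLr.le⟩

lemma extend {w u : V} {r : ℝ} (hw : w ∈ ballOut E x v r) (he : E w u) :
    u ∈ ballOut E x v (r + x u) := by
  obtain ⟨l, ⟨hch, hhd, hlast⟩, hp⟩ := hw
  refine ⟨l ++ [u], ⟨?_, ?_, List.getLast?_concat⟩, ?_⟩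
  · apply List.isChain_append.2
    refine ⟨hch, List.isChain_singleton u, ?_⟩
    intro a ha b hb
    simp only [List.head?_cons, Option.mem_def, Option.some.injEq] at hb
    rw [hlast, Option.mem_def, Option.some.injEq] at ha
    subst ha; subst hb
    exact he
  · rw [List.head?_append, hhd]; rfl
  · show plen x (l ++ [u]) ≤ r + x u
    unfold plen
    rw [List.map_append, List.sum_append]
    simp only [List.map_cons, List.map_nil, List.sum_cons, List.sum_nil, add_zero]
    exact add_le_add hp le_rfl

lemma PS_nonempty_of_mem {u : V} {r : ℝ} (h : u ∈ ballOut E x v r) :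
    (PS E x v u).Nonempty := by
  obtain ⟨l, hl, _⟩ := h
  exact ⟨plen x l, l, hl, rfl⟩

/-- The key growth step. -/
lemma step {V : Type*} [Fintype V] (E : V → V → Prop) (c x : V → ℝ)
    (hc : ∀ u, 0 ≤ c u) (hx0 : ∀ u, 0 ≤ x u) (v : V)
    (a : ℝ) (ha : 0 < a) (hxa : ∀ u, x u ≤ a) (C0 r : ℝ) (hr : 0 < r)
    (hbd : ∀ s, r ≤ s → s < r + a →
      C0 ≤ ∑ u : V, (outBd E (ballOut E x v s)).indicator c u) :
    C0 * a ≤ (∑ u : V, (ballOut E x v (r + 2*a)).indicator (fun w => c w * x w) u)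
           - (∑ u : V, (ballOut E x v r).indicator (fun w => c w * x w) u) := by
  classical
  set D : V → ℝ := fun u => dgr E x v u with hD
  set F : ℝ → ℝ := fun s => ∑ u : V, (Icc (D u - x u) (D u)).indicator (fun _ => c u) s
    with hF
  -- each summand of F is integrable on Ico r (r+a)
  have hint : ∀ u : V,
      IntegrableOn ((Icc (D u - x u) (D u)).indicator (fun _ => c u)) (Ico r (r+a)) := by
    intro u
    apply MeasureTheory.Integrable.indicator _ measurableSet_Icc
    rw [MeasureTheory.integrable_const_iff]
    right
    simp only [isFiniteMeasure_iff, Measure.restrict_apply_univ]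
    rw [Real.volume_Ico]
    exact ENNReal.ofReal_lt_top
  have hFint : IntegrableOn F (Ico r (r+a)) := by
    apply MeasureTheory.integrable_finset_sum
    intro u _
    exact hint u
  -- pointwise lower bound for F on the window
  have hFlow : ∀ s ∈ Ico r (r+a), C0 ≤ F s := by
    intro s hs
    refine le_trans (hbd s hs.1 hs.2) ?_
    apply Finset.sum_le_sum
    intro u _
    by_cases hu : u ∈ outBd E (ballOut E x v s)
    · obtain ⟨hnot, w, hw, he⟩ := hu
      have hub : u ∈ ballOut E x v (s + x u) := extend hw he
      have hne : (PS E x v u).Nonempty := PS_nonempty_of_mem hub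
      have h1 : D u ≤ s + x u := dgr_le_of_mem hx0 hub
      have h2 : s ≤ D u := le_dgr_of_not_mem hne hnot
      rw [Set.indicator_of_mem (show u ∈ outBd E (ballOut E x v s) from ⟨hnot, w, hw, he⟩),
        Set.indicator_of_mem (by constructor <;> linarith)]
    · rw [Set.indicator_of_notMem hu]
      exact Set.indicator_apply_nonneg (fun _ => hc u)
  -- lower bound on the integral
  have hlow : C0 * a ≤ ∫ s in Ico r (r+a), F s := by
    have h1 : (∫ _ in Ico r (r+a), C0) ≤ ∫ s in Ico r (r+a), F s := by
      apply MeasureTheory.setIntegral_mono_on _ hFint measurableSet_Ico hFlow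
      exact MeasureTheory.integrableOn_const (by rw [Real.volume_Ico]; exact ENNReal.ofReal_ne_top)
    rw [MeasureTheory.setIntegral_const, measureReal_def, Real.volume_Ico, smul_eq_mul,
      ENNReal.toReal_ofReal (by linarith)] at h1
    calc C0 * a = (r + a - r) * C0 := by ring
    _ ≤ _ := h1
  -- compute the integral as a sum of interval-overlap lengths
  have hcomp : (∫ s in Ico r (r+a), F s)
      = ∑ u : V, (volume (Icc (D u - x u) (D u) ∩ Ico r (r+a))).toReal * c u := by
    rw [hF]
    rw [MeasureTheory.integral_finset_sum _ (fun u _ => hint u)]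
    apply Finset.sum_congr rfl
    intro u _
    rw [MeasureTheory.setIntegral_indicator measurableSet_Icc,
      MeasureTheory.setIntegral_const, smul_eq_mul, Set.inter_comm, measureReal_def]
  -- bound each overlap term by the indicator of the annulus
  have hterm : ∀ u : V, (volume (Icc (D u - x u) (D u) ∩ Ico r (r+a))).toReal * c u ≤
      ((ballOut E x v (r + 2*a)) \ (ballOut E x v r)).indicator (fun w => c w * x w) u := by
    intro u
    by_cases hur : u ∈ ballOut E x v r
    · have hDu : D u ≤ r := dgr_le_of_mem hx0 hur
      have hz : volume (Icc (D u - x u) (D u) ∩ Ico r (r+a)) = 0 := by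
        apply measure_mono_null (t := {r}) _ Real.volume_singleton
        rintro s ⟨⟨_, h1⟩, h2, _⟩
        simp only [Set.mem_singleton_iff]
        linarith
      rw [hz, Set.indicator_of_notMem (fun hmem => hmem.2 hur)]
      simp
    · by_cases hz : volume (Icc (D u - x u) (D u) ∩ Ico r (r+a)) = 0
      · rw [hz]
        simp only [ENNReal.toReal_zero, zero_mul]
        exact Set.indicator_apply_nonneg (fun _ => mul_nonneg (hc u) (hx0 u))
      · obtain ⟨s, ⟨hs1, hs2⟩, hs3, hs4⟩ := MeasureTheory.nonempty_of_measure_ne_zero hz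
        have hne : (PS E x v u).Nonempty := by
          by_contra hemp
          rw [Set.not_nonempty_iff_eq_empty] at hemp
          have : D u = 0 := by rw [hD]; simp only []; rw [dgr_eq, hemp, Real.sInf_empty]
          linarith
        have hu2 : u ∈ ballOut E x v (r + 2*a) := by
          apply mem_ball_of_dgr_lt hne
          have := hxa u
          linarith
        rw [Set.indicator_of_mem (show u ∈ ballOut E x v (r + 2*a) \ ballOut E x v r from ⟨hu2, hur⟩)]
        have hvle : (volume (Icc (D u - x u) (D u) ∩ Ico r (r+a))).toReal ≤ x u := by
          apply ENNReal.toReal_le_of_le_ofReal (hx0 u)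
          refine le_trans (measure_mono Set.inter_subset_left) ?_
          rw [Real.volume_Icc]
          apply le_of_eq
          congr 1
          ring
        calc (volume (Icc (D u - x u) (D u) ∩ Ico r (r+a))).toReal * c u
            ≤ x u * c u := mul_le_mul_of_nonneg_right hvle (hc u)
          _ = c u * x u := mul_comm _ _
  -- sum of annulus indicators is the difference of ball volumes
  have hdiff : ∑ u : V,
      ((ballOut E x v (r + 2*a)) \ (ballOut E x v r)).indicator (fun w => c w * x w) u
      = (∑ u : V, (ballOut E x v (r + 2*a)).indicator (fun w => c w * x w) u)
        - (∑ u : V, (ballOut E x v r).indicator (fun w => c w * x w) u) := by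
    rw [← Finset.sum_sub_distrib]
    apply Finset.sum_congr rfl
    intro u _
    have hsub : ballOut E x v r ⊆ ballOut E x v (r + 2*a) := ballOut_mono (by linarith)
    by_cases h1 : u ∈ ballOut E x v r
    · rw [Set.indicator_of_notMem (fun hmem => hmem.2 h1), Set.indicator_of_mem (hsub h1),
        Set.indicator_of_mem h1, sub_self]
    · by_cases h2 : u ∈ ballOut E x v (r + 2*a)
      · rw [Set.indicator_of_mem (show u ∈ ballOut E x v (r + 2*a) \ ballOut E x v r from ⟨h2, h1⟩), Set.indicator_of_mem h2,
          Set.indicator_of_notMem h1, sub_zero]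
      · rw [Set.indicator_of_notMem (fun hmem => h2 hmem.1), Set.indicator_of_notMem h1,
          Set.indicator_of_notMem h2, sub_zero]
  calc C0 * a ≤ ∫ s in Ico r (r+a), F s := hlow
    _ = ∑ u : V, (volume (Icc (D u - x u) (D u) ∩ Ico r (r+a))).toReal * c u := hcomp
    _ ≤ ∑ u : V,
        ((ballOut E x v (r + 2*a)) \ (ballOut E x v r)).indicator (fun w => c w * x w) u :=
        Finset.sum_le_sum (fun u _ => hterm u)
    _ = _ := hdiff

end Stmt4Aux

/-- Node-weighted directed region growing: there is a radius
$r ∈ [δ/(6\log_2 n), δ)$ with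
$c(Γ^+(B^+(v,r))) ≤ (12\log_2 n/δ)[\mathrm{vol}(B^+(v,r)) + \mathrm{vol}(V)/n]$. -/
theorem stmt4 {V : Type*} [Fintype V] (E : V → V → Prop) (c x : V → ℝ)
    (hc : ∀ u, 0 ≤ c u) (hx0 : ∀ u, 0 ≤ x u)
    (δ : ℝ) (hδ : 0 < δ)
    (hx : ∀ u, x u ≤ δ / (6 * Real.logb 2 (Fintype.card V)))
    (v : V) :
    ∃ r : ℝ, δ / (6 * Real.logb 2 (Fintype.card V)) ≤ r ∧ r < δ ∧
      (∑ u : V, (outBd E (ballOut E x v r)).indicator c u) ≤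
        (12 * Real.logb 2 (Fintype.card V) / δ) *
          ((∑ u : V, (ballOut E x v r).indicator (fun w => c w * x w) u) +
            (∑ u : V, c u * x u) / Fintype.card V) := by
  classical
  by_cases hcard1 : Fintype.card V = 1
  · -- trivial one-vertex case
    obtain ⟨w, hw⟩ := Fintype.card_eq_one_iff.mp hcard1
    have hlog : Real.logb 2 (Fintype.card V) = 0 := by
      rw [hcard1]; norm_num
    refine ⟨0, ?_, hδ, ?_⟩
    · rw [hlog]; norm_num
    · have hxv : x v ≤ 0 := by
        have := hx v; rwa [hlog, mul_zero, div_zero] at this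
      have hvmem : v ∈ ballOut E x v 0 := by
        refine ⟨[v], ⟨List.isChain_singleton v, rfl, rfl⟩, ?_⟩
        show plen x [v] ≤ 0
        simpa [plen] using hxv
      have hzero : (∑ u : V, (outBd E (ballOut E x v 0)).indicator c u) = 0 := by
        apply Finset.sum_eq_zero
        intro u _
        apply Set.indicator_of_notMem
        intro hmem
        have huv : u = v := (hw u).trans (hw v).symm
        exact hmem.1 (huv ▸ hvmem)
      rw [hzero, hlog]
      norm_num
  · have hn2 : 2 ≤ Fintype.card V := by
      have h1 : 0 < Fintype.card V := Fintype.card_pos_iff.mpr ⟨v⟩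
      omega
    set n : ℝ := (Fintype.card V : ℝ) with hn
    have hn2' : (2:ℝ) ≤ n := by rw [hn]; exact_mod_cast hn2
    set L : ℝ := Real.logb 2 (Fintype.card V) with hLdef
    have hL1 : 1 ≤ L := by
      rw [hLdef]
      rw [Real.le_logb_iff_rpow_le (by norm_num) (by norm_num; omega)]
      rw [Real.rpow_one]; exact_mod_cast hn2
    have hL0 : 0 < L := by linarith
    set a : ℝ := δ / (6 * L) with hadef
    have ha : 0 < a := div_pos hδ (by linarith)
    have haδ : a * (6 * L) = δ := by
      rw [hadef]; field_simp
    have hxa : ∀ u, x u ≤ a := hx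
    set volB : ℝ → ℝ :=
      fun r => ∑ u : V, (ballOut E x v r).indicator (fun w => c w * x w) u with hvolBdef
    set cost : ℝ → ℝ :=
      fun r => ∑ u : V, (outBd E (ballOut E x v r)).indicator c u with hcostdef
    set vol : ℝ := ∑ u : V, c u * x u with hvoldef
    by_contra hcon
    push_neg at hcon
    replace hcon : ∀ r, a ≤ r → r < δ →
        12 * L / δ * (volB r + vol / n) < cost r := hcon
    have hvolB_mono : ∀ r s : ℝ, r ≤ s → volB r ≤ volB s := by
      intro r s hrs
      apply Finset.sum_le_sum
      intro u _
      exact Set.indicator_le_indicator_of_subset (Stmt4Aux.ballOut_mono hrs)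
        (fun w => mul_nonneg (hc w) (hx0 w)) u
    have hvolB_nonneg : ∀ r : ℝ, 0 ≤ volB r := fun r =>
      Finset.sum_nonneg fun u _ =>
        Set.indicator_apply_nonneg fun _ => mul_nonneg (hc u) (hx0 u)
    have hvolB_le : ∀ r : ℝ, volB r ≤ vol := by
      intro r
      apply Finset.sum_le_sum
      intro u _
      exact Set.indicator_le_self' (fun w _ => mul_nonneg (hc w) (hx0 w)) u
    have hδ' : δ ≠ 0 := ne_of_gt hδ
    have hL' : L ≠ 0 := ne_of_gt hL0
    have hκ : 0 ≤ 12 * L / δ := by positivity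
    have hκa : 12 * L / δ * a = 2 := by
      rw [hadef]; field_simp; ring
    have hvolnn : 0 ≤ vol := Finset.sum_nonneg fun u _ => mul_nonneg (hc u) (hx0 u)
    rcases eq_or_lt_of_le hvolnn with hvol0 | hvolpos
    · -- degenerate case: total volume is zero
      have haδ2 : a < δ := by
        rw [hadef]; apply div_lt_self hδ; linarith
      have h := hcon a le_rfl haδ2
      have hcost0 : cost a = 0 := by
        apply Finset.sum_eq_zero
        intro u _
        by_cases hu : u ∈ outBd E (ballOut E x v a)
        · rw [Set.indicator_of_mem hu]
          by_contra hcne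
          have hterm : c u * x u = 0 :=
            (Finset.sum_eq_zero_iff_of_nonneg
              (fun u _ => mul_nonneg (hc u) (hx0 u))).mp hvol0.symm u (Finset.mem_univ u)
          have hxu : x u = 0 := by
            rcases mul_eq_zero.mp hterm with h' | h'
            · exact absurd h' hcne
            · exact h'
          obtain ⟨hnot, w', hw', he'⟩ := hu
          have hmem := Stmt4Aux.extend hw' he'
          rw [hxu, add_zero] at hmem
          exact hnot hmem
        · exact Set.indicator_of_notMem hu _
      rw [hcost0] at h
      have hge : 0 ≤ 12 * L / δ * (volB a + vol / n) := by
        apply mul_nonneg hκ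
        have h0 : 0 ≤ vol / n := by rw [← hvol0]; simp
        linarith [hvolB_nonneg a]
      linarith
    · -- main case: positive volume, iterate the growth step
      have hstep : ∀ r, a ≤ r → r + a ≤ δ →
          3 * (volB r + vol / n) ≤ volB (r + 2*a) + vol / n := by
        intro r har hraδ
        have hbd : ∀ s, r ≤ s → s < r + a →
            12 * L / δ * (volB r + vol / n) ≤
              ∑ u : V, (outBd E (ballOut E x v s)).indicator c u := by
          intro s hrs hsra
          have h1 := hcon s (har.trans hrs) (lt_of_lt_of_le hsra hraδ)
          have h2 : volB r ≤ volB s := hvolB_mono r s hrs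
          calc 12 * L / δ * (volB r + vol / n)
              ≤ 12 * L / δ * (volB s + vol / n) := by
                apply mul_le_mul_of_nonneg_left (by linarith) hκ
            _ ≤ cost s := le_of_lt h1
        have hkey := Stmt4Aux.step E c x hc hx0 v a ha hxa
          (12 * L / δ * (volB r + vol / n)) r (lt_of_lt_of_le ha har) hbd
        have hkey' : 12 * L / δ * (volB r + vol / n) * a ≤ volB (r + 2*a) - volB r := hkey
        have hC0a : 12 * L / δ * (volB r + vol / n) * a = 2 * (volB r + vol / n) := by
          calc 12 * L / δ * (volB r + vol / n) * a
              = 12 * L / δ * a * (volB r + vol / n) := by ring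
            _ = 2 * (volB r + vol / n) := by rw [hκa]
        rw [hC0a] at hkey'
        linarith
      have hiter : ∀ k : ℕ, a * (2*(k:ℝ)+1) + a ≤ δ →
          3^k * (volB a + vol / n) ≤ volB (a*(2*(k:ℝ)+1)) + vol / n := by
        intro k
        induction k with
        | zero =>
          intro _
          norm_num
        | succ k ih =>
          intro hk
          have hcast : ((k+1 : ℕ) : ℝ) = (k : ℝ) + 1 := by push_cast; ring
          rw [hcast] at hk ⊢
          have he1 : a * (2*((k:ℝ)+1)+1) = a*(2*(k:ℝ)+1) + 2*a := by ring
          rw [he1] at hk ⊢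
          have hk' : a*(2*(k:ℝ)+1) + a ≤ δ := by linarith
          have h1 := ih (by linarith)
          have hk0 : (0:ℝ) ≤ (k:ℝ) := Nat.cast_nonneg k
          have hale : a ≤ a*(2*(k:ℝ)+1) := by nlinarith
          have h2 := hstep (a*(2*(k:ℝ)+1)) hale hk'
          calc (3:ℝ)^(k+1) * (volB a + vol/n)
              = 3 * ((3:ℝ)^k * (volB a + vol/n)) := by ring
            _ ≤ 3 * (volB (a*(2*(k:ℝ)+1)) + vol/n) := by linarith
            _ ≤ _ := h2
      set K : ℕ := ⌊3*L⌋₊ - 1 with hK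
      have hfl3 : 3 ≤ ⌊3*L⌋₊ := Nat.le_floor (by push_cast; linarith)
      have hK1 : (K : ℝ) + 1 = (⌊3*L⌋₊ : ℝ) := by
        rw [hK]
        rw [Nat.cast_sub (by omega : 1 ≤ ⌊3*L⌋₊)]
        push_cast; ring
      have hKle : (K:ℝ) + 1 ≤ 3*L := by
        rw [hK1]; exact Nat.floor_le (by linarith)
      have hcond : a*(2*(K:ℝ)+1) + a ≤ δ := by
        have he2 : a*(2*(K:ℝ)+1) + a = a * (2*((K:ℝ)+1)) := by ring
        rw [he2]
        calc a * (2*((K:ℝ)+1)) ≤ a * (6*L) := by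
              apply mul_le_mul_of_nonneg_left (by linarith) ha.le
          _ = δ := haδ
      have hfin := hiter K hcond
      have hvoln : 0 < vol / n := div_pos hvolpos (by linarith)
      have h3K : (3:ℝ)^K ≤ n + 1 := by
        have h1 : (3:ℝ)^K * (vol/n) ≤ vol + vol/n := by
          calc (3:ℝ)^K * (vol/n) ≤ (3:ℝ)^K * (volB a + vol/n) := by
                apply mul_le_mul_of_nonneg_left (by linarith [hvolB_nonneg a]) (by positivity)
            _ ≤ volB (a*(2*(K:ℝ)+1)) + vol/n := hfin
            _ ≤ vol + vol/n := by linarith [hvolB_le (a*(2*(K:ℝ)+1))]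
        have h2 : vol = n * (vol/n) := by field_simp
        nlinarith [hvoln]
      have hlt : n + 1 < (3:ℝ)^K := by
        have hKgt : 3*L - 2 < (K:ℝ) := by
          have hfl := Nat.lt_floor_add_one (3*L)
          rw [← hK1] at hfl
          linarith
        have e1 : (3:ℝ)^K = (3:ℝ)^((K:ℝ)) := (Real.rpow_natCast 3 K).symm
        have e2 : (3:ℝ)^(3*L-2 : ℝ) < (3:ℝ)^((K:ℝ)) :=
          (Real.rpow_lt_rpow_left_iff (by norm_num)).mpr hKgt
        have hn_eq : (2:ℝ)^(L:ℝ) = n := by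
          rw [hLdef, hn]
          exact Real.rpow_logb (by norm_num) (by norm_num) (by norm_num; omega)
        have e27 : (27:ℝ)^(L:ℝ) = n * (13.5:ℝ)^(L:ℝ) := by
          rw [show (27:ℝ) = 2 * 13.5 by norm_num,
            Real.mul_rpow (by norm_num) (by norm_num), hn_eq]
        have e135 : (13.5:ℝ) ≤ (13.5:ℝ)^(L:ℝ) := by
          calc (13.5:ℝ) = (13.5:ℝ)^(1:ℝ) := (Real.rpow_one _).symm
            _ ≤ _ := Real.rpow_le_rpow_of_exponent_le (by norm_num) hL1
        have e4 : (3:ℝ)^(3*L-2:ℝ) = (27:ℝ)^(L:ℝ) / 9 := by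
          rw [Real.rpow_sub (by norm_num)]
          rw [show (3:ℝ)*L = (3:ℝ)*L from rfl]
          rw [Real.rpow_mul (by norm_num : (0:ℝ) ≤ 3) 3 L]
          rw [show ((3:ℝ)^(3:ℝ)) = 27 by norm_num]
          rw [show ((3:ℝ)^(2:ℝ)) = 9 by norm_num]
        have e5 : n + 1 ≤ (3:ℝ)^(3*L-2:ℝ) := by
          rw [e4, e27]
          rw [le_div_iff₀ (by norm_num : (0:ℝ) < 9)]
          nlinarith [e135, hn2']
        rw [e1]
        linarith
      linarith
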